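/- The softmax function σ : ℝ^C → ℝ^C, defined by σ(x)_j = exp(x_j)/Σ_k exp(x_k), is 1-Lipschitz with respect to the Euclidean norm. -/

import Mathlib

open Real Finset

/-- The softmax function on `ℝ^C` (with the Euclidean norm). -/
noncomputable def softmax (C : ℕ) (x : EuclideanSpace ℝ (Fin C)) :
    EuclideanSpace ℝ (Fin C) :=
  WithLp.toLp 2 (fun j => Real.exp (x j) / ∑ k, Real.exp (x k))

/-- Key scalar inequality: if `σ i ∈ [0,1]` and `∑ σ ≤ 1`, then
`∑ (σ i (v i - ⟨σ,v⟩))² ≤ ∑ v i²`. -/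
lemma softmax_key {C : ℕ} (σ v : Fin C → ℝ) (h0 : ∀ i, 0 ≤ σ i) (h1 : ∀ i, σ i ≤ 1)
    (hT : ∑ i, σ i ≤ 1) :
    ∑ i, (σ i * (v i - ∑ k, σ k * v k)) ^ 2 ≤ ∑ i, (v i) ^ 2 := by
  set s := ∑ k, σ k * v k with hs
  have step1 : ∑ i, (σ i * (v i - s)) ^ 2 ≤ ∑ i, σ i * (v i - s) ^ 2 := by
    refine Finset.sum_le_sum fun i _ => ?_
    have hσσ : σ i * σ i ≤ σ i := by nlinarith [h0 i, h1 i]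
    calc (σ i * (v i - s)) ^ 2 = (σ i * σ i) * (v i - s) ^ 2 := by ring
      _ ≤ σ i * (v i - s) ^ 2 := mul_le_mul_of_nonneg_right hσσ (sq_nonneg _)
  have expand : ∑ i, σ i * (v i - s) ^ 2
      = (∑ i, σ i * (v i) ^ 2) - 2 * s * (∑ i, σ i * v i) + s ^ 2 * (∑ i, σ i) := by
    calc ∑ i, σ i * (v i - s) ^ 2
        = ∑ i, (σ i * (v i) ^ 2 - 2 * s * (σ i * v i) + s ^ 2 * σ i) :=
          Finset.sum_congr rfl fun i _ => by ring
      _ = (∑ i, σ i * (v i) ^ 2) - 2 * s * (∑ i, σ i * v i) + s ^ 2 * (∑ i, σ i) := by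
          rw [Finset.sum_add_distrib, Finset.sum_sub_distrib, ← Finset.mul_sum, ← Finset.mul_sum]
  have h2 : ∑ i, σ i * (v i) ^ 2 ≤ ∑ i, (v i) ^ 2 := by
    refine Finset.sum_le_sum fun i _ => ?_
    nlinarith [h0 i, h1 i, sq_nonneg (v i)]
  have hssq : 0 ≤ s ^ 2 := sq_nonneg s
  calc ∑ i, (σ i * (v i - s)) ^ 2 ≤ ∑ i, σ i * (v i - s) ^ 2 := step1
    _ = (∑ i, σ i * (v i) ^ 2) - 2 * s * s + s ^ 2 * (∑ i, σ i) := by rw [expand, ← hs]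
    _ ≤ ∑ i, (v i) ^ 2 := by nlinarith

/-- The candidate derivative of the `j`-th coordinate of softmax at `y` (a plain `Pi` space
continuous linear map). -/
noncomputable def softmaxDerivCoord (C : ℕ) (y : Fin C → ℝ) (j : Fin C) :
    (Fin C → ℝ) →L[ℝ] ℝ :=
  Real.exp (y j) • ((-((∑ k, Real.exp (y k)) ^ 2)⁻¹) •
      (∑ k, Real.exp (y k) • ContinuousLinearMap.proj (R := ℝ) (φ := fun _ : Fin C => ℝ) k)) +
    (∑ k, Real.exp (y k))⁻¹ •
      (Real.exp (y j) • ContinuousLinearMap.proj (R := ℝ) (φ := fun _ : Fin C => ℝ) j)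

lemma softmaxDerivCoord_apply (C : ℕ) (y w : Fin C → ℝ) (j : Fin C)
    (hS0 : (∑ k, Real.exp (y k)) ≠ 0) :
    (softmaxDerivCoord C y j) w
      = (Real.exp (y j) / ∑ k, Real.exp (y k)) *
          (w j - ∑ k, (Real.exp (y k) / ∑ l, Real.exp (y l)) * w k) := by
  have h1 : (softmaxDerivCoord C y j) w
      = Real.exp (y j) * ((-((∑ k, Real.exp (y k)) ^ 2)⁻¹) * (∑ k, Real.exp (y k) * w k))
        + (∑ k, Real.exp (y k))⁻¹ * (Real.exp (y j) * w j) := by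
    simp [softmaxDerivCoord, Finset.mul_sum]
  have h2 : ∑ k, (Real.exp (y k) / ∑ l, Real.exp (y l)) * w k
      = (∑ k, Real.exp (y k) * w k) / (∑ l, Real.exp (y l)) := by
    rw [Finset.sum_div]
    exact Finset.sum_congr rfl fun k _ => by ring
  rw [h1, h2]
  field_simp
  ring

lemma softmax_hasFDerivAt_pi (C : ℕ) (y : Fin C → ℝ) :
    HasFDerivAt (fun z : Fin C → ℝ => fun j => Real.exp (z j) / ∑ k, Real.exp (z k))
      (ContinuousLinearMap.pi (softmaxDerivCoord C y)) y := by
  rw [hasFDerivAt_pi]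
  intro j
  have hS0 : (∑ k, Real.exp (y k)) ≠ 0 := by
    have : Nonempty (Fin C) := ⟨j⟩
    exact ne_of_gt (Finset.sum_pos (fun k _ => Real.exp_pos _) Finset.univ_nonempty)
  have hu : HasFDerivAt (fun z : Fin C → ℝ => Real.exp (z j))
      (Real.exp (y j) • ContinuousLinearMap.proj (R := ℝ) (φ := fun _ : Fin C => ℝ) j) y :=
    (Real.hasDerivAt_exp (y j)).comp_hasFDerivAt (f := fun z : Fin C → ℝ => z j) y (hasFDerivAt_apply j y)
  have hS : HasFDerivAt (fun z : Fin C → ℝ => ∑ k, Real.exp (z k))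
      (∑ k, Real.exp (y k) • ContinuousLinearMap.proj (R := ℝ) (φ := fun _ : Fin C => ℝ) k) y :=
    HasFDerivAt.fun_sum fun k _ =>
      (Real.hasDerivAt_exp (y k)).comp_hasFDerivAt (f := fun z : Fin C → ℝ => z k) y (hasFDerivAt_apply k y)
  have hinv : HasDerivAt (fun t : ℝ => t⁻¹) (-((∑ k, Real.exp (y k)) ^ 2)⁻¹)
      (∑ k, Real.exp (y k)) := hasDerivAt_inv hS0
  have hw : HasFDerivAt (fun z : Fin C → ℝ => (∑ k, Real.exp (z k))⁻¹)
      ((-((∑ k, Real.exp (y k)) ^ 2)⁻¹) •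
        (∑ k, Real.exp (y k) • ContinuousLinearMap.proj (R := ℝ) (φ := fun _ : Fin C => ℝ) k)) y :=
    hinv.comp_hasFDerivAt y hS
  have := hu.fun_mul hw
  simpa [softmaxDerivCoord, div_eq_mul_inv] using this

theorem softmax_lipschitz (C : ℕ) : LipschitzWith 1 (softmax C) := by
  classical
  set e := PiLp.continuousLinearEquiv 2 ℝ (fun _ : Fin C => ℝ) with he
  set D : EuclideanSpace ℝ (Fin C) →
      EuclideanSpace ℝ (Fin C) →L[ℝ] EuclideanSpace ℝ (Fin C) := fun x =>
    (e.symm.toContinuousLinearMap.comp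
      ((ContinuousLinearMap.pi (softmaxDerivCoord C (e x))).comp e.toContinuousLinearMap))
    with hD
  rw [← lipschitzOnWith_univ]
  refine Convex.lipschitzOnWith_of_nnnorm_hasFDerivWithin_le (f' := D) ?_ ?_ convex_univ
  · intro x _
    apply HasFDerivAt.hasFDerivWithinAt
    have h1 := softmax_hasFDerivAt_pi C (e x)
    have h2 := h1.comp x (e.toContinuousLinearMap.hasFDerivAt (x := x))
    have h3 := (e.symm.toContinuousLinearMap.hasFDerivAt
      (x := (fun j => Real.exp ((e x) j) / ∑ k, Real.exp ((e x) k) : Fin C → ℝ))).comp x h2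
    exact h3
  · intro x _
    suffices hb : ‖D x‖ ≤ 1 by
      rwa [← NNReal.coe_le_coe, coe_nnnorm, NNReal.coe_one]
    refine ContinuousLinearMap.opNorm_le_bound _ zero_le_one fun v => ?_
    rw [one_mul]
    set σ : Fin C → ℝ := fun j => Real.exp ((e x) j) / ∑ k, Real.exp ((e x) k) with hσ
    have hval : ∀ j, (D x v) j = σ j * (v j - ∑ k, σ k * v k) := by
      intro j
      have hS0 : (∑ k, Real.exp ((e x) k)) ≠ 0 := by
        have : Nonempty (Fin C) := ⟨j⟩
        exact ne_of_gt (Finset.sum_pos (fun k _ => Real.exp_pos _) Finset.univ_nonempty)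
      have happ : (D x v) j = (softmaxDerivCoord C (e x) j) (e v) := rfl
      rw [happ, softmaxDerivCoord_apply C (e x) (e v) j hS0]
      rfl
    have h0 : ∀ i, 0 ≤ σ i := by
      intro i
      have : Nonempty (Fin C) := ⟨i⟩
      have hSpos : (0:ℝ) < ∑ k, Real.exp ((e x) k) :=
        Finset.sum_pos (fun k _ => Real.exp_pos _) Finset.univ_nonempty
      exact div_nonneg (Real.exp_pos _).le hSpos.le
    have h1 : ∀ i, σ i ≤ 1 := by
      intro i
      have : Nonempty (Fin C) := ⟨i⟩
      have hSpos : (0:ℝ) < ∑ k, Real.exp ((e x) k) :=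
        Finset.sum_pos (fun k _ => Real.exp_pos _) Finset.univ_nonempty
      rw [hσ]
      rw [div_le_one hSpos]
      exact Finset.single_le_sum (fun k _ => (Real.exp_pos _).le) (Finset.mem_univ i)
    have hT : ∑ i, σ i ≤ 1 := by
      rcases isEmpty_or_nonempty (Fin C) with h | h
      · simp
      · have hSpos : (0:ℝ) < ∑ k, Real.exp ((e x) k) :=
          Finset.sum_pos (fun k _ => Real.exp_pos _) Finset.univ_nonempty
        rw [hσ]
        rw [← Finset.sum_div, div_le_one hSpos]
    rw [EuclideanSpace.norm_eq, EuclideanSpace.norm_eq]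
    apply Real.sqrt_le_sqrt
    calc ∑ j, ‖(D x v) j‖ ^ 2 = ∑ j, (σ j * (v j - ∑ k, σ k * v k)) ^ 2 := by
          refine Finset.sum_congr rfl fun j _ => ?_
          rw [hval j, Real.norm_eq_abs, sq_abs]
      _ ≤ ∑ j, (v j) ^ 2 := softmax_key σ (fun j => v j) h0 h1 hT
      _ = ∑ j, ‖v j‖ ^ 2 := by
          refine Finset.sum_congr rfl fun j _ => ?_
          rw [Real.norm_eq_abs, sq_abs]
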